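/- Let n > 0, 0 < δ < β₀, f(x) = x/(1 + xⁿ), x* = (β₀/δ − 1)^{1/n} and β₁ = f′(x*). Then the conditions β₁ < 0 and β₁ < −δ/(β₀(1 − 2h(x₀))) hold if and only if n > (2(1 − h(x₀))/(1 − 2h(x₀)))·β₀/(β₀ − δ). -/

import Mathlib

/-- `h(x) = sin(x)/x`. -/
noncomputable def hfun (x : ℝ) : ℝ := Real.sin x / x

/-- `x₀`, the smallest `x > 0` with `x = tan x` and `h(x) > 0` (numerically `x₀ ≈ 7.725`,
`h(x₀) ≈ 0.1284`). -/
noncomputable def xZero : ℝ := sInf {x : ℝ | 0 < x ∧ x = Real.tan x ∧ 0 < hfun x}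

open Real

lemma shift_sin (x : ℝ) : Real.sin x = Real.cos (5*π/2 - x) := by
  have : 5*π/2 - x = (π/2 - x) + 2*π := by ring
  rw [this, Real.cos_add_two_pi, Real.cos_pi_div_two_sub]

lemma shift_cos (x : ℝ) : Real.cos x = Real.sin (5*π/2 - x) := by
  have : 5*π/2 - x = (π/2 - x) + 2*π := by ring
  rw [this, Real.sin_add_two_pi, Real.sin_pi_div_two_sub]

lemma pi_lb : (3.141592 : ℝ) < π := Real.pi_gt_d6
lemma pi_ub : π < 3.141593 := Real.pi_lt_d6

-- existence of an element of S in [7.7, 7.8]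
lemma exists_mem_S : ∃ c ∈ Set.Icc (7.7:ℝ) 7.8, 0 < c ∧ c = Real.tan c ∧ 0 < hfun c := by
  have hpl := pi_lb; have hpu := pi_ub
  set g : ℝ → ℝ := fun x => Real.sin x - x * Real.cos x with hg
  have hcont : ContinuousOn g (Set.Icc 7.7 7.8) := by fun_prop
  have key : ∀ x ∈ Set.Icc (7.7:ℝ) 7.8, Real.sin x = Real.cos (5*π/2 - x) ∧
      Real.cos x = Real.sin (5*π/2 - x) ∧ 0.05398 < 5*π/2 - x ∧ 5*π/2 - x < 0.1539825 := by
    intro x hx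
    refine ⟨shift_sin x, shift_cos x, by nlinarith [hx.2], by nlinarith [hx.1]⟩
  have hg77 : g 7.7 ≤ 0 := by
    obtain ⟨hs, hc, _, _⟩ := key 7.7 (by constructor <;> norm_num)
    obtain ⟨u, hu⟩ : ∃ u : ℝ, u = 5*π/2 - 7.7 := ⟨_, rfl⟩
    rw [← hu] at hs hc
    have hu1 : (0.15398:ℝ) < u := by rw [hu]; nlinarith
    have hu2 : u < 0.1539825 := by rw [hu]; nlinarith
    have hsin : u - u^3/4 < Real.sin u := by
      have := Real.sin_gt_sub_cube (x := u) (by linarith)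
      nlinarith [pow_pos (show (0:ℝ) < u by linarith) 3]
    have hcos : Real.cos u ≤ 1 := Real.cos_le_one u
    have hu0 : (0:ℝ) < u := by linarith
    have h2 : u^2 < 0.0256 := by nlinarith
    have hcube : u^3 < 0.005 := by nlinarith [mul_lt_mul_of_pos_left h2 hu0]
    rw [hg]; simp only; rw [hs, hc]
    nlinarith
  have hg78 : (0:ℝ) ≤ g 7.8 := by
    obtain ⟨hs, hc, _, _⟩ := key 7.8 (by constructor <;> norm_num)
    obtain ⟨u, hu⟩ : ∃ u : ℝ, u = 5*π/2 - 7.8 := ⟨_, rfl⟩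
    rw [← hu] at hs hc
    have hu1 : (0.05398:ℝ) < u := by rw [hu]; nlinarith
    have hu2 : u < 0.0539825 := by rw [hu]; nlinarith
    have hsin : Real.sin u < u := Real.sin_lt (by linarith)
    have hcos : 1 - u^2/2 ≤ Real.cos u := Real.one_sub_sq_div_two_le_cos
    rw [hg]; simp only; rw [hs, hc]
    nlinarith
  obtain ⟨c, hc, hgc⟩ := intermediate_value_Icc (by norm_num : (7.7:ℝ) ≤ 7.8) hcont ⟨hg77, hg78⟩
  obtain ⟨hs, hcc, hu1, hu2⟩ := key c hc
  have hpi2 : (0.1539825:ℝ) < π/2 := by linarith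
  have hcospos : 0 < Real.cos c := by
    rw [hcc]; exact Real.sin_pos_of_pos_of_lt_pi (by linarith) (by linarith)
  have hsinpos : 0 < Real.sin c := by
    rw [hs]; exact Real.cos_pos_of_mem_Ioo ⟨by linarith, by linarith⟩
  have hgc' : Real.sin c = c * Real.cos c := by
    have : Real.sin c - c * Real.cos c = 0 := hgc
    linarith
  have hcpos : (0:ℝ) < c := by have := hc.1; linarith
  refine ⟨c, hc, hcpos, ?_, ?_⟩
  · rw [Real.tan_eq_sin_div_cos, hgc', mul_div_assoc, div_self hcospos.ne', mul_one]
  · exact div_pos hsinpos hcpos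

-- every element of S is ≥ 7
lemma S_lb : ∀ x : ℝ, 0 < x → x = Real.tan x → 0 < hfun x → 7 ≤ x := by
  intro x hx htan hh
  by_contra hlt
  push_neg at hlt
  have hpl := pi_lb; have hpu := pi_ub
  have hsinpos : 0 < Real.sin x := by
    have : 0 < Real.sin x / x := hh
    have := (div_pos_iff.mp this)
    rcases this with ⟨h1, _⟩ | ⟨_, h2⟩
    · exact h1
    · linarith
  rcases le_or_gt x (2*π) with h2pi | h2pi
  · -- x ≤ 2π, sin x > 0 ⇒ x < π
    have hxpi : x < π := by
      by_contra hge
      push_neg at hge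
      have : Real.sin (x - π) = -Real.sin x := Real.sin_sub_pi x
      have hnn : 0 ≤ Real.sin (x - π) :=
        Real.sin_nonneg_of_nonneg_of_le_pi (by linarith) (by linarith)
      linarith
    rcases lt_trichotomy x (π/2) with h | h | h
    · have := Real.lt_tan hx h
      linarith
    · rw [h, Real.tan_pi_div_two] at htan; linarith [Real.pi_pos]
    · have hcneg : Real.cos x < 0 := Real.cos_neg_of_pi_div_two_lt_of_lt h (by linarith)
      have : Real.tan x < 0 := by
        rw [Real.tan_eq_sin_div_cos]
        exact div_neg_of_pos_of_neg hsinpos hcneg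
      linarith
  · -- 2π < x < 7
    have ht : Real.tan x = Real.tan (x - 2*π) := by
      have := Real.tan_periodic.sub_eq (x := x)  -- tan (x - π) = tan x
      have h1 : Real.tan (x - 2*π) = Real.tan (x - 2*π + π) := (Real.tan_periodic (x - 2*π)).symm
      have h2 : x - 2*π + π = x - π := by ring
      rw [h1, h2, Real.tan_sub_pi]
    have hb1 : 0 < x - 2*π := by linarith
    have hb2 : x - 2*π < 0.72 := by nlinarith
    have : Real.tan (x - 2*π) < Real.tan (π/4) :=
      Real.tan_lt_tan_of_nonneg_of_lt_pi_div_two (le_of_lt hb1) (by linarith) (by nlinarith)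
    rw [Real.tan_pi_div_four] at this
    rw [ht] at htan
    linarith

lemma xZero_bounds : 7 ≤ xZero ∧ xZero ≤ 7.8 := by
  obtain ⟨c, hc, hcS⟩ := exists_mem_S
  have hne : Set.Nonempty {x : ℝ | 0 < x ∧ x = Real.tan x ∧ 0 < hfun x} := ⟨c, hcS⟩
  have hbdd : BddBelow {x : ℝ | 0 < x ∧ x = Real.tan x ∧ 0 < hfun x} :=
    ⟨7, fun x hx => S_lb x hx.1 hx.2.1 hx.2.2⟩
  constructor
  · exact le_csInf hne (fun x hx => S_lb x hx.1 hx.2.1 hx.2.2)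
  · exact le_trans (csInf_le hbdd hcS) hc.2

lemma hfun_xZero : 0 < hfun xZero ∧ hfun xZero ≤ 1/7 := by
  obtain ⟨h1, h2⟩ := xZero_bounds
  have hpl := pi_lb; have hpu := pi_ub
  have hsinpos : 0 < Real.sin xZero := by
    rw [← Real.sin_sub_two_pi]
    exact Real.sin_pos_of_pos_of_lt_pi (by linarith) (by linarith)
  constructor
  · exact div_pos hsinpos (by linarith)
  · rw [hfun, div_le_div_iff₀ (by linarith) (by norm_num)]
    nlinarith [Real.sin_le_one xZero]

/-- for the Hill nonlinearity `f(x) = x/(1 + xⁿ)`, with equilibrium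
`x* = (β₀/δ − 1)^{1/n}` and `β₁ = f′(x*)`, the hypotheses `β₁ < 0` and
`β₁ < −δ/(β₀(1 − 2h(x₀)))` of the Hopf bifurcation theorem hold iff
`n > (2(1 − h(x₀))/(1 − 2h(x₀))) β₀/(β₀ − δ)`. -/
theorem hill_hopf_condition
    (n δ β₀ : ℝ) (hn : 0 < n) (hδ : 0 < δ) (hδβ : δ < β₀)
    (f : ℝ → ℝ) (hf : ∀ x : ℝ, f x = x / (1 + x ^ n))
    (xstar : ℝ) (hxstar : xstar = (β₀ / δ - 1) ^ (1 / n : ℝ))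
    (β₁ : ℝ) (hβ₁ : β₁ = deriv f xstar) :
    (β₁ < 0 ∧ β₁ < -δ / (β₀ * (1 - 2 * hfun xZero))) ↔
      n > (2 * (1 - hfun xZero) / (1 - 2 * hfun xZero)) * (β₀ / (β₀ - δ)) := by

  have hB : (0:ℝ) < β₀ := lt_trans hδ hδβ
  have ha : (0:ℝ) < β₀ / δ - 1 := by
    rw [sub_pos, lt_div_iff₀ hδ]; linarith
  have hx0 : 0 < xstar := by
    rw [hxstar]; exact Real.rpow_pos_of_pos ha _
  have hxn : xstar ^ n = β₀ / δ - 1 := by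
    rw [hxstar, ← Real.rpow_mul ha.le, one_div, inv_mul_cancel₀ hn.ne', Real.rpow_one]
  -- derivative computation
  have hpow : HasDerivAt (fun x : ℝ => x ^ n) (n * xstar ^ (n - 1)) xstar :=
    Real.hasDerivAt_rpow_const (Or.inl hx0.ne')
  have hden : HasDerivAt (fun x : ℝ => 1 + x ^ n) (n * xstar ^ (n - 1)) xstar :=
    hpow.const_add 1
  have hne : 1 + xstar ^ n ≠ 0 := by
    rw [hxn]
    have : (0:ℝ) < β₀ / δ := div_pos hB hδ
    intro habs; rw [show (1:ℝ) + (β₀/δ - 1) = β₀/δ by ring] at habs; linarith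
  have hdiv := (hasDerivAt_id xstar).div hden hne
  have hfeq : f = fun x => x / (1 + x ^ n) := funext hf
  have hderiv : deriv f xstar =
      (1 * (1 + xstar ^ n) - xstar * (n * xstar ^ (n - 1))) / (1 + xstar ^ n) ^ 2 := by
    rw [hfeq]; exact hdiv.deriv
  have hxx : xstar ^ n = xstar ^ (n - 1) * xstar := by
    have h := Real.rpow_add hx0 (n - 1) 1
    rw [Real.rpow_one, show n - 1 + 1 = n by ring] at h
    exact h
  have hβval : β₁ = δ * (β₀ - n * (β₀ - δ)) / β₀ ^ 2 := by
    rw [hβ₁, hderiv]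
    have h1 : xstar * (n * xstar ^ (n - 1)) = n * (β₀ / δ - 1) := by
      rw [← hxn, hxx]; ring
    rw [h1, hxn]
    field_simp [hB.ne']
    ring
  -- facts about H
  obtain ⟨hH0, hH7⟩ := hfun_xZero
  set H := hfun xZero with hH
  have h2H : (0:ℝ) < 1 - 2 * H := by linarith
  have hK : (0:ℝ) < β₀ - δ := by linarith
  constructor
  · rintro ⟨h1, h2⟩
    rw [hβval, div_lt_div_iff₀ (by positivity) (by positivity)] at h2
    rw [gt_iff_lt, div_mul_div_comm, div_lt_iff₀ (by positivity)]
    nlinarith [mul_pos hδ hB, sq_nonneg β₀]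
  · intro h
    rw [gt_iff_lt, div_mul_div_comm, div_lt_iff₀ (by positivity)] at h
    have hn2 : β₀ < n * (β₀ - δ) := by nlinarith
    constructor
    · rw [hβval]
      apply div_neg_of_neg_of_pos
      · nlinarith
      · positivity
    · rw [hβval, div_lt_div_iff₀ (by positivity) (by positivity)]
      nlinarith [mul_pos hδ hB]
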